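/- Let d ≥ 1, ε ∈ (0,1), and let P ⊆ ℝ^d be a set of points such that every ellipsoid E ⊆ [0,1]^d with vol(E) ≥ ε/d^d contains a point of P. Then every compact convex set Ξ ⊆ ℝ^d with vol(Ξ ∩ [0,1]^d) ≥ ε contains a point of P. -/

import Mathlib

open MeasureTheory

noncomputable section

/-- The unit cube `[0,1]^d` in `ℝ^d`. -/
def unitCube (d : ℕ) : Set (EuclideanSpace ℝ (Fin d)) :=
  {x | ∀ i, x i ∈ Set.Icc (0 : ℝ) 1}

/-- A `k`-flat in `ℝ^d`: a (nonempty) affine subspace of dimension `k`. -/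
def IsKFlat (d k : ℕ) (f : AffineSubspace ℝ (EuclideanSpace ℝ (Fin d))) : Prop :=
  (f : Set (EuclideanSpace ℝ (Fin d))).Nonempty ∧ Module.finrank ℝ f.direction = k

/-- A family `S` of flats is a `(k,ε)`-net for `[0,1]^d` if every compact convex set `Ξ`
with `vol (Ξ ∩ [0,1]^d) ≥ ε` is intersected by some flat of `S`. -/
def IsKENet (d : ℕ) (ε : ℝ)
    (S : Set (AffineSubspace ℝ (EuclideanSpace ℝ (Fin d)))) : Prop :=
  ∀ Ξ : Set (EuclideanSpace ℝ (Fin d)), IsCompact Ξ → Convex ℝ Ξ →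
    ENNReal.ofReal ε ≤ volume (Ξ ∩ unitCube d) →
    ∃ f ∈ S, (Ξ ∩ (f : Set (EuclideanSpace ℝ (Fin d)))).Nonempty

/-- An ellipsoid in `ℝ^d`: the image of the closed Euclidean unit ball under an invertible
affine transformation. -/
def IsEllipsoid (d : ℕ) (E : Set (EuclideanSpace ℝ (Fin d))) : Prop :=
  ∃ A : EuclideanSpace ℝ (Fin d) ≃ᵃ[ℝ] EuclideanSpace ℝ (Fin d),
    E = A '' Metric.closedBall 0 1


open Metric

/-! ### Auxiliary lemmas towards John's ellipsoid theorem -/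

lemma unitCube_eq_pi (d : ℕ) :
    unitCube d = (EuclideanSpace.equiv (Fin d) ℝ) ⁻¹' Set.pi Set.univ (fun _ : Fin d => Set.Icc (0:ℝ) 1) := by
  ext x; exact ⟨fun h i _ => h i, fun h i => h i (Set.mem_univ i)⟩

lemma unitCube_isCompact (d : ℕ) : IsCompact (unitCube d) := by
  rw [unitCube_eq_pi]
  exact (EuclideanSpace.equiv (Fin d) ℝ).toHomeomorph.isCompact_preimage.2 (isCompact_univ_pi fun i => isCompact_Icc)

lemma unitCube_convex (d : ℕ) : Convex ℝ (unitCube d) := by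
  rw [unitCube_eq_pi]
  exact (convex_pi fun i _ => convex_Icc 0 1).linear_preimage (EuclideanSpace.equiv (Fin d) ℝ).toLinearEquiv.toLinearMap


lemma claim1 (s t y r2 : ℝ) (hs : 1 < s) (ht : 0 < t) (ht4 : t ≤ (s-1)/4)
    (hy1 : -1 ≤ y) (hy2 : s*y ≤ 1)
    (hr : (1+t)^2 * r2 ≤ (1-2*t/(s-1)) * ((1+t)^2 - (y-t)^2)) :
    y^2 + r2 ≤ 1 := by
  have hs1 : (0:ℝ) < s - 1 := by linarith
  have hb2 : (1-2*t/(s-1)) * (s-1) = s-1-2*t := by field_simp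
  set b2 : ℝ := 1-2*t/(s-1) with hb2def
  have key : s^2*(s-1)*((1+t)^2*(1-y^2) - (1+t)^2*b2 + b2*(y-t)^2) =
      t^2*(s+1)^2*s*(y+1) + ((1+t)^2*(s-1) - (s-1-2*t))*s*(y+1)*(1-s*y) := by
    linear_combination (s^2*((y-t)^2 - (1+t)^2)) * hb2
  have h3' : (0:ℝ) ≤ y + 1 := by linarith
  have h1 : 0 ≤ t^2*(s+1)^2*s*(y+1) := by positivity
  have h2 : 0 ≤ ((1+t)^2*(s-1) - (s-1-2*t))*s*(y+1)*(1-s*y) := by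
    have e : (1+t)^2*(s-1) - (s-1-2*t) = (2*t+t^2)*(s-1) + 2*t := by ring
    rw [e]
    have h3 : (0:ℝ) ≤ y + 1 := by linarith
    have h4 : (0:ℝ) ≤ 1 - s*y := by linarith
    have h5 : (0:ℝ) ≤ (2*t+t^2)*(s-1) + 2*t := by positivity
    positivity
  have hpos : (0:ℝ) < s^2*(s-1) := by positivity
  have hF : 0 ≤ (1+t)^2*(1-y^2) - (1+t)^2*b2 + b2*(y-t)^2 := by
    nlinarith [key, h1, h2, hpos]
  nlinarith [hF, hr, sq_nonneg (1+t)]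

set_option maxHeartbeats 1000000 in
lemma claim2 (s t y r2 : ℝ) (hs : 1 < s) (ht : 0 < t) (ht4 : t ≤ (s-1)/4)
    (hy : 1 < s*y) (hr0 : 0 ≤ r2)
    (hr : (1+t)^2 * r2 ≤ (1-2*t/(s-1)) * ((1+t)^2 - (y-t)^2)) :
    ∃ θ : ℝ, 0 ≤ θ ∧ θ < 1 ∧ (y - θ*s)^2 + r2 ≤ (1-θ)^2 := by
  have hs1 : (0:ℝ) < s - 1 := by linarith
  have hs0 : (0:ℝ) < s := by linarith
  have hss : (0:ℝ) < s^2 - 1 := by nlinarith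
  have hb2pos : (0:ℝ) < 1-2*t/(s-1) := by
    rw [sub_pos, div_lt_one hs1]; linarith
  have hb2 : (1-2*t/(s-1)) * (s-1) = s-1-2*t := by field_simp
  have hyle : (y-t)^2 ≤ (1+t)^2 := by nlinarith [mul_nonneg (sq_nonneg (1+t)) hr0]
  have hys : y < s := by nlinarith
  have hB1 : (0:ℝ) < s-1-2*t := by linarith
  have hA : (0:ℝ) < (1+t)^2 + (s+1)*(s-1-2*t) := by positivity
  have hG : 0 ≤ (1+t)^2*(s-y)^2 - (s+1)*(s-1-2*t)*((1+t)^2-(y-t)^2) := by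
    have key : ((1+t)^2 + (s+1)*(s-1-2*t)) *
        ((1+t)^2*(s-y)^2 - (s+1)*(s-1-2*t)*((1+t)^2-(y-t)^2)) =
        (((1+t)^2 + (s+1)*(s-1-2*t))*y - s*(1+t)^2 - t*(s+1)*(s-1-2*t))^2 := by ring
    nlinarith [key, sq_nonneg (((1+t)^2 + (s+1)*(s-1-2*t))*y - s*(1+t)^2 - t*(s+1)*(s-1-2*t)), hA]
  have hr' : (1+t)^2*(r2*(s^2-1)) ≤ (s+1)*(s-1-2*t)*((1+t)^2-(y-t)^2) := by
    have := mul_le_mul_of_nonneg_right hr hss.le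
    calc (1+t)^2*(r2*(s^2-1)) = (1+t)^2*r2*(s^2-1) := by ring
    _ ≤ (1-2*t/(s-1)) * ((1+t)^2 - (y-t)^2) * (s^2-1) := this
    _ = (s+1)*((1-2*t/(s-1))*(s-1))*((1+t)^2-(y-t)^2) := by ring
    _ = (s+1)*(s-1-2*t)*((1+t)^2-(y-t)^2) := by rw [hb2]
  have h6 : (1+t)^2*(r2*(s^2-1)) ≤ (1+t)^2*((s-y)^2) := by nlinarith [hr', hG]
  have hrle : r2 * (s^2-1) ≤ (s-y)^2 :=
    le_of_mul_le_mul_left h6 (by positivity)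
  refine ⟨1 - s*(s-y)/(s^2-1), ?_, ?_, ?_⟩
  · have : s*(s-y)/(s^2-1) ≤ 1 := by
      rw [div_le_one hss]; nlinarith
    linarith
  · have : 0 < s*(s-y)/(s^2-1) := div_pos (mul_pos hs0 (by linarith)) hss
    linarith
  · have e2 : y - (1 - s*(s-y)/(s^2-1))*s = (s-y)/(s^2-1) := by
      field_simp; ring
    have e1 : 1 - (1 - s*(s-y)/(s^2-1)) = s*(s-y)/(s^2-1) := by ring
    rw [e2, e1]
    have h9 : r2 ≤ (s^2-1) * ((s-y)/(s^2-1))^2 := by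
      have e3 : (s^2-1) * ((s-y)/(s^2-1))^2 = (s-y)^2/(s^2-1) := by
        field_simp
      rw [e3, le_div_iff₀ hss]
      exact hrle
    have e4 : (s*(s-y)/(s^2-1))^2 = s^2 * ((s-y)/(s^2-1))^2 := by
      rw [mul_div_assoc, mul_pow]
    rw [e4]
    nlinarith [h9]


lemma john_scalar (d : ℕ) (hd : 1 ≤ d) (s : ℝ) (hs : (d:ℝ) < s) :
    ∃ t : ℝ, 0 < t ∧ t ≤ (s-1)/4 ∧ 1 < (1+t)^2 * (1 - 2*t/(s-1))^(d-1) := by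
  have hn : (1:ℝ) ≤ (d:ℝ) := by exact_mod_cast Nat.one_le_cast.mpr hd
  have hs1 : (0:ℝ) < s - 1 := by linarith
  set q : ℝ := 2*((d:ℝ)-1)/(s-1) with hq
  have hq0 : 0 ≤ q := div_nonneg (by linarith) hs1.le
  have hq2 : q < 2 := by
    rw [hq, div_lt_iff₀ hs1]; linarith
  set t : ℝ := min ((2-q)/(2*(q+2))) ((s-1)/4) with htdef
  have ht0 : 0 < t := lt_min (div_pos (by linarith) (by linarith)) (by positivity)
  have ht4 : t ≤ (s-1)/4 := min_le_right _ _
  have htq : 2*(q+2)*t ≤ 2-q := by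
    have h := min_le_left ((2-q)/(2*(q+2))) ((s-1)/4)
    rw [← htdef] at h
    rw [← le_div_iff₀' (by positivity : (0:ℝ) < 2*(q+2))]
    exact h
  refine ⟨t, ht0, ht4, ?_⟩
  have hqt1 : q*t ≤ 1 := by nlinarith
  have hqtnn : 0 ≤ 1 - q*t := by linarith
  have hcast : ((d - 1 : ℕ) : ℝ) = (d:ℝ) - 1 := by
    push_cast [hd]; ring
  have hber : 1 - q*t ≤ (1 - 2*t/(s-1))^(d-1) := by
    have hx : (-2:ℝ) ≤ -(2*t/(s-1)) := by
      have : 2*t/(s-1) ≤ 2 := by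
        rw [div_le_iff₀ hs1]; linarith
      linarith
    have h := one_add_mul_le_pow hx (d-1)
    have e : (1:ℝ) + ((d-1:ℕ):ℝ) * (-(2*t/(s-1))) = 1 - q*t := by
      rw [hcast, hq]; field_simp; ring
    rw [e] at h
    have e2 : (1 + -(2*t/(s-1))) = 1 - 2*t/(s-1) := by ring
    rwa [e2] at h
  have h1 : 1 < (1+t)^2 * (1 - q*t) := by
    nlinarith [mul_le_mul_of_nonneg_left htq ht0.le, mul_pos ht0 ht0, mul_nonneg (mul_nonneg hq0 ht0.le) ht0.le]
  calc (1:ℝ) < (1+t)^2 * (1-q*t) := h1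
  _ ≤ (1+t)^2 * (1 - 2*t/(s-1))^(d-1) := by
      apply mul_le_mul_of_nonneg_left hber (by positivity)




/-- The stretched map `u ↦ b•u + (a-b)⟪e,u⟫e` as a continuous linear map. -/
def stretchMap {d : ℕ} (a b : ℝ) (e : EuclideanSpace ℝ (Fin d)) : EuclideanSpace ℝ (Fin d) →L[ℝ] EuclideanSpace ℝ (Fin d) :=
  b • ContinuousLinearMap.id ℝ (EuclideanSpace ℝ (Fin d)) + (a - b) • ((innerSL ℝ e).smulRight e)

lemma stretchMap_apply {d : ℕ} (a b : ℝ) (e u : EuclideanSpace ℝ (Fin d)) :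
    stretchMap a b e u = b • u + (a - b) • (inner ℝ e u : ℝ) • e := by
  simp [stretchMap, smul_smul]

lemma stretchMap_det {d : ℕ} (hd : 1 ≤ d) (a b : ℝ) (e : EuclideanSpace ℝ (Fin d)) (he : ‖e‖ = 1) :
    LinearMap.det ((stretchMap a b e : EuclideanSpace ℝ (Fin d) →L[ℝ] EuclideanSpace ℝ (Fin d)) :
      EuclideanSpace ℝ (Fin d) →ₗ[ℝ] EuclideanSpace ℝ (Fin d)) = a * b ^ (d - 1) := by
  have i0 : Fin d := ⟨0, hd⟩
  -- orthonormal basis with first vector e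
  have hcard : Module.finrank ℝ (EuclideanSpace ℝ (Fin d)) = Fintype.card (Fin d) := by
    simp [finrank_euclideanSpace]
  have horth : Orthonormal ℝ (Set.restrict {i0} (fun _ : Fin d => e)) := by
    constructor
    · intro i; exact he
    · intro i j hij
      exfalso
      exact hij (Subtype.ext (by
        have hi := i.2; have hj := j.2
        simp only [Set.mem_singleton_iff] at hi hj
        rw [hi, hj]))
  obtain ⟨v, hv⟩ := horth.exists_orthonormalBasis_extension_of_card_eq hcard
  have hve : v i0 = e := hv i0 rfl
  have hmat : LinearMap.toMatrix v.toBasis v.toBasis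
      ((stretchMap a b e : _ →L[ℝ] _) : _ →ₗ[ℝ] _) =
      Matrix.diagonal (fun i => if i = i0 then a else b) := by
    ext i j
    rw [LinearMap.toMatrix_apply]
    simp only [OrthonormalBasis.coe_toBasis, OrthonormalBasis.coe_toBasis_repr_apply,
      OrthonormalBasis.repr_apply_apply]
    rw [ContinuousLinearMap.coe_coe, stretchMap_apply]
    rw [inner_add_right, real_inner_smul_right, real_inner_smul_right, real_inner_smul_right]
    have hvv : ∀ k l : Fin d, (inner ℝ (v k) (v l) : ℝ) = if k = l then 1 else 0 :=
      fun k l => orthonormal_iff_ite.mp v.orthonormal k l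
    rw [← hve, hvv, hvv]
    by_cases hij : i = j
    · subst hij
      by_cases hii : i = i0
      · subst hii
        simp [Matrix.diagonal, hvv]
      · simp [Matrix.diagonal, hii, hvv, Ne.symm hii]
    · by_cases hji : j = i0
      · have hii0 : i ≠ i0 := fun h => hij (h.trans hji.symm)
        simp [Matrix.diagonal, hij, hvv, hii0]
      · simp only [Matrix.diagonal, hvv, Matrix.of_apply]
        rw [if_neg hij, if_neg (fun h : i0 = j => hji h.symm), if_neg hij]
        ring
  rw [← LinearMap.det_toMatrix v.toBasis, hmat, Matrix.det_diagonal]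
  rw [← Finset.mul_prod_erase Finset.univ _ (Finset.mem_univ i0)]
  simp only [if_pos rfl]
  congr 1
  have : ∀ i ∈ Finset.univ.erase i0, (if i = i0 then a else b) = b := by
    intro i hi
    rw [if_neg (Finset.ne_of_mem_erase hi)]
  rw [Finset.prod_congr rfl this, Finset.prod_const]
  congr 1
  rw [Finset.card_erase_of_mem (Finset.mem_univ i0)]
  simp

set_option maxHeartbeats 2000000 in
lemma john_core (d : ℕ) (hd : 1 ≤ d) (K : Set (EuclideanSpace ℝ (Fin d))) (hconv : Convex ℝ K)
    (hball : closedBall (0 : EuclideanSpace ℝ (Fin d)) 1 ⊆ K)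
    (hmax : ∀ (M : EuclideanSpace ℝ (Fin d) →L[ℝ] EuclideanSpace ℝ (Fin d))
      (c : EuclideanSpace ℝ (Fin d)), (∀ u, ‖u‖ ≤ 1 → M u + c ∈ K) →
      |LinearMap.det (M : EuclideanSpace ℝ (Fin d) →ₗ[ℝ] EuclideanSpace ℝ (Fin d))| ≤ 1) :
    K ⊆ closedBall (0 : EuclideanSpace ℝ (Fin d)) d := by
  intro x hx
  by_contra hxout
  have hs : (d:ℝ) < ‖x‖ := by
    simpa [mem_closedBall, dist_zero_right, not_le] using hxout
  set s := ‖x‖ with hsdef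
  have hs1 : (1:ℝ) < s := lt_of_le_of_lt (by exact_mod_cast hd) hs
  have hs0 : (0:ℝ) < s := by linarith
  obtain ⟨t, ht0, ht4, hvol⟩ := john_scalar d hd s hs
  set e : EuclideanSpace ℝ (Fin d) := s⁻¹ • x with hedef
  have he : ‖e‖ = 1 := by
    rw [hedef, norm_smul, Real.norm_eq_abs, abs_of_pos (inv_pos.2 hs0), ← hsdef]
    field_simp
  have hxe : s • e = x := by rw [hedef, smul_inv_smul₀ hs0.ne']
  clear_value e
  set a : ℝ := 1 + t with hadef
  set b2 : ℝ := 1 - 2*t/(s-1) with hb2def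
  have hb2pos : 0 < b2 := by
    rw [hb2def, sub_pos, div_lt_one (by linarith : (0:ℝ) < s - 1)]
    linarith
  set b : ℝ := Real.sqrt b2 with hbdef
  have hbsq : b^2 = b2 := Real.sq_sqrt hb2pos.le
  have hbpos : 0 < b := Real.sqrt_pos.2 hb2pos
  have ha0 : 0 < a := by rw [hadef]; linarith
  clear_value a b2 b
  -- membership of the stretched ball in K
  have hmem : ∀ u : EuclideanSpace ℝ (Fin d), ‖u‖ ≤ 1 → stretchMap a b e u + t • e ∈ K := by
    intro u hu
    set w : ℝ := (inner ℝ e u : ℝ) with hwdef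
    have hw1 : |w| ≤ 1 := by
      rw [hwdef]
      calc |(inner ℝ e u : ℝ)| ≤ ‖e‖ * ‖u‖ := abs_real_inner_le_norm e u
      _ ≤ 1 := by rw [he]; simpa using hu
    set p : EuclideanSpace ℝ (Fin d) := u - w • e with hpdef
    have hep : (inner ℝ e p : ℝ) = 0 := by
      rw [hpdef, inner_sub_right, real_inner_smul_right, real_inner_self_eq_norm_sq, he, hwdef]
      ring
    set y1 : ℝ := t + a * w with hy1def
    have hy : stretchMap a b e u + t • e = y1 • e + b • p := by
      rw [stretchMap_apply, hpdef, hy1def, ← hwdef]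
      module
    have hpnorm : ‖p‖^2 = ‖u‖^2 - w^2 := by
      have : ‖u‖^2 = ‖p‖^2 + w^2 := by
        have hu' : u = p + w • e := by rw [hpdef]; abel
        rw [hu', norm_add_sq_real, real_inner_smul_right, real_inner_comm e p, hep, norm_smul, he,
          Real.norm_eq_abs, mul_one, sq_abs]
        ring
      linarith
    set r2 : ℝ := b^2 * ‖p‖^2 with hr2def
    have hr2nn : 0 ≤ r2 := by positivity
    have hr : (1+t)^2 * r2 ≤ (1-2*t/(s-1)) * ((1+t)^2 - (y1-t)^2) := by
      have h1 : ‖p‖^2 ≤ 1 - w^2 := by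
        rw [hpnorm]
        nlinarith [hu, norm_nonneg u]
      have h2 : (y1 - t)^2 = a^2 * w^2 := by rw [hy1def]; ring
      rw [← hadef, ← hb2def, ← hbsq]
      calc a^2 * (b^2 * ‖p‖^2) = b^2 * (a^2 * ‖p‖^2) := by ring
      _ ≤ b^2 * (a^2 * (1 - w^2)) := by
          apply mul_le_mul_of_nonneg_left _ (by positivity)
          apply mul_le_mul_of_nonneg_left h1 (by positivity)
      _ = b^2 * (a^2 - (y1-t)^2) := by rw [h2]; ring
    have hynorm : ‖y1 • e + b • p‖^2 = y1^2 + r2 := by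
      rw [norm_add_sq_real, real_inner_smul_left, real_inner_smul_right, hep, norm_smul, norm_smul,
        he, Real.norm_eq_abs, Real.norm_eq_abs, hr2def]
      rw [mul_pow, mul_pow, sq_abs, sq_abs]
      ring
    have hy1low : -1 ≤ y1 := by
      rw [hy1def, hadef]
      nlinarith [abs_le.mp hw1]
    rw [hy]
    by_cases hcase : s * y1 ≤ 1
    · -- inside the unit ball
      have h := claim1 s t y1 r2 hs1 ht0 ht4 hy1low hcase hr
      apply hball
      rw [mem_closedBall, dist_zero_right]
      nlinarith [hynorm, norm_nonneg (y1 • e + b • p)]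
    · push_neg at hcase
      obtain ⟨θ, hθ0, hθ1, hθ⟩ := claim2 s t y1 r2 hs1 ht0 ht4 hcase hr2nn hr
      set yy : EuclideanSpace ℝ (Fin d) := y1 • e + b • p with hyydef
      have hyx : ‖yy - θ • x‖^2 = (y1 - θ*s)^2 + r2 := by
        have : yy - θ • x = (y1 - θ*s) • e + b • p := by
          rw [hyydef, ← hxe]
          module
        rw [this, norm_add_sq_real, real_inner_smul_left, real_inner_smul_right, hep, norm_smul,
          norm_smul, he, Real.norm_eq_abs, Real.norm_eq_abs, hr2def, mul_pow, mul_pow, sq_abs,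
          sq_abs]
        ring
      have h1θ : (0:ℝ) < 1 - θ := by linarith
      set z : EuclideanSpace ℝ (Fin d) := (1-θ)⁻¹ • (yy - θ • x) with hzdef
      have hznorm : ‖z‖ ≤ 1 := by
        rw [hzdef, norm_smul, Real.norm_eq_abs, abs_of_pos (inv_pos.2 h1θ)]
        rw [inv_mul_le_iff₀ h1θ, mul_one]
        nlinarith [hyx, hθ, norm_nonneg (yy - θ • x)]
      have hzK : z ∈ K := hball (by rwa [mem_closedBall, dist_zero_right])
      have hcomb := hconv hzK hx (by linarith : (0:ℝ) ≤ 1 - θ) hθ0 (by ring)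
      have : (1-θ) • z + θ • x = yy := by
        rw [hzdef, smul_inv_smul₀ h1θ.ne']
        abel
      rwa [this] at hcomb
  -- contradiction with maximality
  have hdet := hmax (stretchMap a b e) (t • e) hmem
  rw [stretchMap_det hd a b e he] at hdet
  have hgt : 1 < a * b^(d-1) := by
    have hsq : (a * b^(d-1))^2 = a^2 * b2^(d-1) := by
      rw [← hbsq, mul_pow, ← pow_mul, ← pow_mul, mul_comm (d-1) 2, pow_mul]
    have hpos : 0 < a * b^(d-1) := by positivity
    nlinarith [hvol, hsq, hpos]
  rw [abs_of_pos (by positivity)] at hdet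
  linarith

set_option maxHeartbeats 2000000 in
lemma john_exists (d : ℕ) (hd : 1 ≤ d) (K : Set (EuclideanSpace ℝ (Fin d)))
    (hKc : IsCompact K) (hKconv : Convex ℝ K) (hKvol : volume K ≠ 0) :
    ∃ A : EuclideanSpace ℝ (Fin d) ≃ᵃ[ℝ] EuclideanSpace ℝ (Fin d),
      A '' closedBall 0 1 ⊆ K ∧
      volume K ≤ ENNReal.ofReal ((d:ℝ)^d) * volume (A '' closedBall 0 1) := by
  classical
  -- interior is nonempty
  have hint : (interior K).Nonempty := by
    by_contra h'
    rw [Set.not_nonempty_iff_eq_empty] at h'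
    have h2 : affineSpan ℝ K ≠ ⊤ := by
      intro htop
      rw [← hKconv.interior_nonempty_iff_affineSpan_eq_top] at htop
      simp [h'] at htop
    exact hKvol (measure_mono_null (subset_affineSpan ℝ K)
      (Measure.addHaar_affineSubspace _ _ h2))
  obtain ⟨x0, hx0⟩ := hint
  obtain ⟨ρ, hρ0, hρ⟩ := Metric.isOpen_iff.1 isOpen_interior x0 hx0
  -- the compact parameter space
  set S : Set ((EuclideanSpace ℝ (Fin d) →L[ℝ] EuclideanSpace ℝ (Fin d)) ×
      EuclideanSpace ℝ (Fin d)) :=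
    {p | ∀ u : EuclideanSpace ℝ (Fin d), ‖u‖ ≤ 1 → p.1 u + p.2 ∈ K} with hSdef
  have hSclosed : IsClosed S := by
    have hSeq : S = ⋂ (u : EuclideanSpace ℝ (Fin d)) (_ : ‖u‖ ≤ 1),
        {p : (EuclideanSpace ℝ (Fin d) →L[ℝ] EuclideanSpace ℝ (Fin d)) ×
          EuclideanSpace ℝ (Fin d) | p.1 u + p.2 ∈ K} := by
      ext p; simp [hSdef]
    rw [hSeq]
    refine isClosed_iInter fun u => isClosed_iInter fun _ => ?_
    have hcont : Continuous fun p : (EuclideanSpace ℝ (Fin d) →L[ℝ] EuclideanSpace ℝ (Fin d)) ×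
        EuclideanSpace ℝ (Fin d) => p.1 u + p.2 :=
      ((ContinuousLinearMap.apply ℝ (EuclideanSpace ℝ (Fin d)) u).continuous.comp
        continuous_fst).add continuous_snd
    exact IsClosed.preimage hcont hKc.isClosed
  obtain ⟨R, hR⟩ := hKc.isBounded.subset_closedBall 0
  have hSbounded : Bornology.IsBounded S := by
    apply Bornology.IsBounded.subset (Metric.isBounded_closedBall
      (x := ((0, 0) : (EuclideanSpace ℝ (Fin d) →L[ℝ] EuclideanSpace ℝ (Fin d)) ×
        EuclideanSpace ℝ (Fin d))) (r := 2*R + R))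
    intro p hp
    have hc : ‖p.2‖ ≤ R := by
      have := hR (hp 0 (by simp))
      simpa [dist_zero_right] using this
    have hRnn : 0 ≤ R := le_trans (norm_nonneg _) hc
    have hunit : ∀ v : EuclideanSpace ℝ (Fin d), ‖v‖ ≤ 1 → ‖p.1 v‖ ≤ 2*R := by
      intro v hv
      have h1 : ‖p.1 v + p.2‖ ≤ R := by simpa [dist_zero_right] using hR (hp v hv)
      have h3 : ‖p.1 v‖ ≤ ‖p.1 v + p.2‖ + ‖p.2‖ := by
        simpa using norm_sub_le (p.1 v + p.2) p.2
      linarith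
    have hL : ‖p.1‖ ≤ 2*R := by
      refine ContinuousLinearMap.opNorm_le_of_ball zero_lt_one (by linarith) fun u hu => ?_
      rcases eq_or_ne u 0 with rfl | hu0
      · simpa using by positivity
      · have hnu : 0 < ‖u‖ := norm_pos_iff.2 hu0
        have hv1 : ‖(‖u‖⁻¹ • u : EuclideanSpace ℝ (Fin d))‖ ≤ 1 := by
          rw [norm_smul, Real.norm_eq_abs, abs_of_pos (inv_pos.2 hnu), inv_mul_cancel₀ hnu.ne']
        have h4 := hunit _ hv1
        have h5 : p.1 u = ‖u‖ • p.1 (‖u‖⁻¹ • u) := by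
          rw [← _root_.map_smul, smul_inv_smul₀ hnu.ne']
        rw [h5, norm_smul, Real.norm_eq_abs, abs_of_pos hnu, mul_comm]
        exact mul_le_mul_of_nonneg_right h4 hnu.le
    rw [Metric.mem_closedBall, Prod.dist_eq]
    refine max_le ?_ ?_ <;> rw [dist_zero_right] <;> linarith
  have hScompact : IsCompact S := isCompact_of_isClosed_isBounded hSclosed hSbounded
  -- S contains a small ball map
  have hS0 : ((ρ/2 : ℝ) • ContinuousLinearMap.id ℝ (EuclideanSpace ℝ (Fin d)), x0) ∈ S := by
    intro u hu
    apply interior_subset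
    apply hρ
    rw [Metric.mem_ball]
    dsimp only
    simp only [ContinuousLinearMap.coe_smul', Pi.smul_apply, ContinuousLinearMap.coe_id', id_eq]
    have heq : (ρ/2 : ℝ) • u + x0 - x0 = (ρ/2 : ℝ) • u := by abel
    rw [dist_eq_norm, heq, norm_smul, Real.norm_eq_abs, abs_of_pos (by positivity : (0:ℝ) < ρ/2)]
    nlinarith [norm_nonneg u]
  -- maximize |det|
  have hcontdet : ContinuousOn (fun p : (EuclideanSpace ℝ (Fin d) →L[ℝ] EuclideanSpace ℝ (Fin d)) ×
      EuclideanSpace ℝ (Fin d) => |LinearMap.det (p.1 : EuclideanSpace ℝ (Fin d) →ₗ[ℝ]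
        EuclideanSpace ℝ (Fin d))|) S :=
    ((ContinuousLinearMap.continuous_det.comp continuous_fst).abs).continuousOn
  obtain ⟨q, hqS, hqmax⟩ := hScompact.exists_isMaxOn ⟨_, hS0⟩ hcontdet
  set L := q.1 with hLdef
  set c := q.2 with hcdef
  have hdet0 : 0 < |LinearMap.det (L : EuclideanSpace ℝ (Fin d) →ₗ[ℝ] EuclideanSpace ℝ (Fin d))| := by
    have h1 := hqmax hS0
    simp only [Set.mem_setOf_eq] at h1
    have h2 : LinearMap.det (((ρ/2 : ℝ) • ContinuousLinearMap.id ℝ (EuclideanSpace ℝ (Fin d)) :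
        EuclideanSpace ℝ (Fin d) →L[ℝ] EuclideanSpace ℝ (Fin d)) : EuclideanSpace ℝ (Fin d) →ₗ[ℝ]
        EuclideanSpace ℝ (Fin d)) = (ρ/2)^d := by
      rw [ContinuousLinearMap.coe_smul, ContinuousLinearMap.coe_id, LinearMap.det_smul]
      simp [finrank_euclideanSpace]
    calc (0:ℝ) < (ρ/2)^d := by positivity
    _ = |LinearMap.det (((ρ/2 : ℝ) • ContinuousLinearMap.id ℝ (EuclideanSpace ℝ (Fin d)) :
        EuclideanSpace ℝ (Fin d) →L[ℝ] EuclideanSpace ℝ (Fin d)) : EuclideanSpace ℝ (Fin d) →ₗ[ℝ]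
        EuclideanSpace ℝ (Fin d))| := by rw [h2, abs_of_pos (by positivity)]
    _ ≤ _ := h1
  have hdetne : LinearMap.det (L : EuclideanSpace ℝ (Fin d) →ₗ[ℝ] EuclideanSpace ℝ (Fin d)) ≠ 0 :=
    fun h => by simp [h] at hdet0
  -- build the affine equivalence
  set Lequiv : EuclideanSpace ℝ (Fin d) ≃ₗ[ℝ] EuclideanSpace ℝ (Fin d) :=
    LinearMap.equivOfDetNeZero _ hdetne with hLequivdef
  have hLequiv_apply : ∀ y, Lequiv y = L y := fun y => rfl
  set A : EuclideanSpace ℝ (Fin d) ≃ᵃ[ℝ] EuclideanSpace ℝ (Fin d) :=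
    Lequiv.toAffineEquiv.trans (AffineEquiv.constVAdd ℝ (EuclideanSpace ℝ (Fin d)) c) with hAdef
  have hA_apply : ∀ y, A y = L y + c := by
    intro y
    exact add_comm c (L y)
  -- volume of images under A
  have hvolA : ∀ T : Set (EuclideanSpace ℝ (Fin d)), volume (A '' T) =
      ENNReal.ofReal |LinearMap.det (L : EuclideanSpace ℝ (Fin d) →ₗ[ℝ]
        EuclideanSpace ℝ (Fin d))| * volume T := by
    intro T
    have him : A '' T = (fun z => c + z) '' ((L : EuclideanSpace ℝ (Fin d) →ₗ[ℝ]
        EuclideanSpace ℝ (Fin d)) '' T) := by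
      rw [Set.image_image]
      apply Set.image_congr
      intro y _
      rw [hA_apply y, add_comm]
      rfl
    rw [him, Set.image_add_left, measure_preimage_add, Measure.addHaar_image_linearMap]
  -- the preimage body
  set K' : Set (EuclideanSpace ℝ (Fin d)) := ⇑A ⁻¹' K with hK'def
  have hK'conv : Convex ℝ K' := hKconv.affine_preimage A.toAffineMap
  have hball' : closedBall (0 : EuclideanSpace ℝ (Fin d)) 1 ⊆ K' := by
    intro u hu
    rw [hK'def, Set.mem_preimage, hA_apply]
    exact hqS u (by simpa [dist_zero_right] using hu)
  have hmax' : ∀ (M : EuclideanSpace ℝ (Fin d) →L[ℝ] EuclideanSpace ℝ (Fin d))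
      (c' : EuclideanSpace ℝ (Fin d)), (∀ u, ‖u‖ ≤ 1 → M u + c' ∈ K') →
      |LinearMap.det (M : EuclideanSpace ℝ (Fin d) →ₗ[ℝ] EuclideanSpace ℝ (Fin d))| ≤ 1 := by
    intro M c' hMc
    have hpair : (L.comp M, L c' + c) ∈ S := by
      intro u hu
      have h1 := hMc u hu
      rw [hK'def, Set.mem_preimage, hA_apply] at h1
      have : L (M u + c') + c = (L.comp M) u + (L c' + c) := by
        rw [map_add, ContinuousLinearMap.comp_apply]
        abel
      rwa [this] at h1
    have h2 := hqmax hpair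
    simp only [Set.mem_setOf_eq] at h2
    rw [ContinuousLinearMap.toLinearMap_comp, LinearMap.det_comp, abs_mul] at h2
    nlinarith [h2, hdet0, abs_nonneg (LinearMap.det (M : EuclideanSpace ℝ (Fin d) →ₗ[ℝ] EuclideanSpace ℝ (Fin d)))]
  -- apply the core lemma
  have hcore := john_core d hd K' hK'conv hball' hmax'
  -- K is contained in the image of the big ball
  have hKsub : K ⊆ A '' closedBall 0 (d:ℝ) := by
    intro z hz
    refine ⟨A.symm z, ?_, by simp⟩
    have : A (A.symm z) = z := A.apply_symm_apply z
    exact hcore (by rw [hK'def, Set.mem_preimage, this]; exact hz)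
  refine ⟨A, ?_, ?_⟩
  · intro z hz
    obtain ⟨u, hu, rfl⟩ := hz
    rw [hA_apply]
    exact hqS u (by simpa [dist_zero_right] using hu)
  · calc volume K ≤ volume (A '' closedBall 0 (d:ℝ)) := measure_mono hKsub
    _ = ENNReal.ofReal |LinearMap.det (L : EuclideanSpace ℝ (Fin d) →ₗ[ℝ]
        EuclideanSpace ℝ (Fin d))| * volume (closedBall 0 (d:ℝ)) := hvolA _
    _ = ENNReal.ofReal |LinearMap.det (L : EuclideanSpace ℝ (Fin d) →ₗ[ℝ]
        EuclideanSpace ℝ (Fin d))| * (ENNReal.ofReal ((d:ℝ)^d) * volume (ball (0 : EuclideanSpace ℝ (Fin d)) 1)) := by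
        rw [Measure.addHaar_closedBall _ _ (by positivity : (0:ℝ) ≤ (d:ℝ))]
        congr 2
        simp [finrank_euclideanSpace]
    _ = ENNReal.ofReal ((d:ℝ)^d) * (ENNReal.ofReal |LinearMap.det (L : EuclideanSpace ℝ (Fin d) →ₗ[ℝ]
        EuclideanSpace ℝ (Fin d))| * volume (ball (0 : EuclideanSpace ℝ (Fin d)) 1)) := by ring
    _ ≤ ENNReal.ofReal ((d:ℝ)^d) * (ENNReal.ofReal |LinearMap.det (L : EuclideanSpace ℝ (Fin d) →ₗ[ℝ]
        EuclideanSpace ℝ (Fin d))| * volume (closedBall (0 : EuclideanSpace ℝ (Fin d)) 1)) := by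
        gcongr
        exact ball_subset_closedBall
    _ = ENNReal.ofReal ((d:ℝ)^d) * volume (A '' closedBall 0 1) := by rw [hvolA]


/-- If every ellipsoid `E ⊆ [0,1]^d` of volume at least `ε/d^d` contains a point of `P`,
then every compact convex set `Ξ` with `vol (Ξ ∩ [0,1]^d) ≥ ε` contains a point of `P`. -/
theorem ellipsoids_suffice (d : ℕ) (hd : 1 ≤ d) (ε : ℝ) (hε : ε ∈ Set.Ioo (0 : ℝ) 1)
    (P : Set (EuclideanSpace ℝ (Fin d)))
    (hP : ∀ E : Set (EuclideanSpace ℝ (Fin d)), IsEllipsoid d E → E ⊆ unitCube d →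
      ENNReal.ofReal (ε / (d : ℝ) ^ d) ≤ volume E → (E ∩ P).Nonempty) :
    ∀ Ξ : Set (EuclideanSpace ℝ (Fin d)), IsCompact Ξ → Convex ℝ Ξ →
      ENNReal.ofReal ε ≤ volume (Ξ ∩ unitCube d) → (Ξ ∩ P).Nonempty := by
  intro Xi hXic hXiconv hXivol
  have hcubeC : IsCompact (unitCube d) := unitCube_isCompact d
  have hcubeConv : Convex ℝ (unitCube d) := unitCube_convex d
  set K : Set (EuclideanSpace ℝ (Fin d)) := Xi ∩ unitCube d with hKdef
  have hKc : IsCompact K := hXic.inter_right hcubeC.isClosed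
  have hKconv : Convex ℝ K := hXiconv.inter hcubeConv
  have hKvol : volume K ≠ 0 := by
    intro h0
    rw [h0] at hXivol
    exact absurd (le_antisymm hXivol zero_le) (ne_of_gt (ENNReal.ofReal_pos.2 hε.1))
  obtain ⟨A, hsub, hle⟩ := john_exists d hd K hKc hKconv hKvol
  have hE : IsEllipsoid d (A '' Metric.closedBall 0 1) := ⟨A, rfl⟩
  have hEcube : A '' Metric.closedBall 0 1 ⊆ unitCube d :=
    hsub.trans Set.inter_subset_right
  have hdd : (0:ℝ) < (d:ℝ)^d := by
    have : (0:ℝ) < (d:ℝ) := by exact_mod_cast Nat.pos_of_ne_zero (by omega)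
    positivity
  have hEvol : ENNReal.ofReal (ε / (d : ℝ) ^ d) ≤ volume (A '' Metric.closedBall 0 1) := by
    have h1 : ENNReal.ofReal ε ≤ ENNReal.ofReal ((d:ℝ)^d) * volume (A '' Metric.closedBall 0 1) :=
      le_trans hXivol hle
    rw [ENNReal.ofReal_div_of_pos hdd, ENNReal.div_le_iff_le_mul
      (Or.inl (ne_of_gt (ENNReal.ofReal_pos.2 hdd))) (Or.inl ENNReal.ofReal_ne_top)]
    rwa [mul_comm] at h1
  obtain ⟨pt, hptE, hptP⟩ := hP _ hE hEcube hEvol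
  exact ⟨pt, (hsub hptE).1, hptP⟩
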